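/- The weighting functor applied to M_t(λ, α) yields the intermediate-series module A_t(α − 1): explicitly, setting w_n = image of 1 and v_n = image of ∂·1 in M_t(λ,α)/ker(μ_{-n})M_t(λ,α), and rescaling ŵ_n = λ^n w_{−n}, v̂_n = λ^n v_{−n}, the 𝒯-action becomes L_m ŵ_n = (−n + m(α−1))ŵ_{n+m}, L_m v̂_n = (−n + m(α−1/2))v̂_{n+m}, I_r ŵ_n = −2t^{2r}α ŵ_{n+r}, I_r v̂_n = (1−2α)t^{2r} v̂_{n+r}, G_p ŵ_n = t^{2p} v̂_{n+p}, G_p v̂_n = (−t)^{2p}(−n + (2α−1)p)ŵ_{n+p}; hence W(M_t(λ, α)) ≅ A_t(α − 1) as 𝒯-modules. -/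
import Mathlib


open Polynomial

/- `M_t(λ,α) = ℂ[∂²] ⊕ ∂ℂ[∂²]` is encoded as pairs of polynomials; `λ = ν²`;
half-integer indices are doubled.  The weighting functor `𝒲` (Nilsson) for the
Cartan subalgebra `ℂL₀`: `𝒲(M) = ⊕_c M/ker(μ_c)M`, where the class of `(f,g)` in
`M/ker(μ_c)M` is `(f(c), g(c))` (evaluation at `L₀ = c`), and an operator of
ad-`L₀`-eigenvalue `−d` maps the component at `c` to the component at `c − d`.
Components are supported on `c ∈ (1/2)ℤ`, encoded by doubled indices, so
`𝒲(M) = (ℤ →₀ ℂ) × (ℤ →₀ ℂ)` with component `k` the class in `M/ker(μ_{k/2})M`. -/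

noncomputable def MLop (nu α : ℂ) (m : ℤ) (v : Polynomial ℂ × Polynomial ℂ) :
    Polynomial ℂ × Polynomial ℂ :=
  (nu ^ (2 * m) • ((X + C ((m : ℂ) * α)) * v.1.comp (X + C (m : ℂ))),
   nu ^ (2 * m) • ((X + C ((m : ℂ) * (α + 1/2))) * v.2.comp (X + C (m : ℂ))))

noncomputable def MIop (t nu α : ℂ) (a : ℤ) (v : Polynomial ℂ × Polynomial ℂ) :
    Polynomial ℂ × Polynomial ℂ :=
  ((-2 * t ^ a * nu ^ a * α) • v.1.comp (X + C ((a : ℂ) / 2)),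
   (t ^ a * nu ^ a * (1 - 2 * α)) • v.2.comp (X + C ((a : ℂ) / 2)))

noncomputable def MGop (t nu α : ℂ) (a : ℤ) (v : Polynomial ℂ × Polynomial ℂ) :
    Polynomial ℂ × Polynomial ℂ :=
  (((-t) ^ a * nu ^ a) • ((X + C ((a : ℂ) * α)) * v.2.comp (X + C ((a : ℂ) / 2))),
   (t ^ a * nu ^ a) • v.1.comp (X + C ((a : ℂ) / 2)))

/-- The action of `L_m` on `𝒲(M_t(λ,α))` induced by the weighting functor:
`L_m` has ad-`L₀`-eigenvalue `−m`, so it maps the class at weight `k/2` of a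
representative to the class at weight `k/2 − m` of `L_m` of that representative. -/
noncomputable def WLop (nu α : ℂ) (m : ℤ) (w : (ℤ →₀ ℂ) × (ℤ →₀ ℂ)) :
    (ℤ →₀ ℂ) × (ℤ →₀ ℂ) :=
  (w.1.sum fun k c => Finsupp.single (k - 2 * m)
      ((MLop nu α m (C c, 0)).1.eval (((k - 2 * m : ℤ) : ℂ) / 2)),
   w.2.sum fun k c => Finsupp.single (k - 2 * m)
      ((MLop nu α m (0, C c)).2.eval (((k - 2 * m : ℤ) : ℂ) / 2)))

/-- The induced action of `I_r` (`r = a/2`, ad-eigenvalue `−r`) on `𝒲(M_t(λ,α))`. -/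
noncomputable def WIop (t nu α : ℂ) (a : ℤ) (w : (ℤ →₀ ℂ) × (ℤ →₀ ℂ)) :
    (ℤ →₀ ℂ) × (ℤ →₀ ℂ) :=
  (w.1.sum fun k c => Finsupp.single (k - a)
      ((MIop t nu α a (C c, 0)).1.eval (((k - a : ℤ) : ℂ) / 2)),
   w.2.sum fun k c => Finsupp.single (k - a)
      ((MIop t nu α a (0, C c)).2.eval (((k - a : ℤ) : ℂ) / 2)))

/-- The induced action of `G_p` (`p = a/2`, ad-eigenvalue `−p`) on `𝒲(M_t(λ,α))`. -/
noncomputable def WGop (t nu α : ℂ) (a : ℤ) (w : (ℤ →₀ ℂ) × (ℤ →₀ ℂ)) :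
    (ℤ →₀ ℂ) × (ℤ →₀ ℂ) :=
  (w.2.sum fun k c => Finsupp.single (k - a)
      ((MGop t nu α a (0, C c)).1.eval (((k - a : ℤ) : ℂ) / 2)),
   w.1.sum fun k c => Finsupp.single (k - a)
      ((MGop t nu α a (C c, 0)).2.eval (((k - a : ℤ) : ℂ) / 2)))

/- The intermediate series module `A_t(σ)`, with doubled indices. -/
noncomputable def ALop (σ : ℂ) (m : ℤ) (w : (ℤ →₀ ℂ) × (ℤ →₀ ℂ)) :
    (ℤ →₀ ℂ) × (ℤ →₀ ℂ) :=
  (w.1.sum fun k c => Finsupp.single (k + 2 * m) ((-(k : ℂ) / 2 + σ * m) * c),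
   w.2.sum fun k c => Finsupp.single (k + 2 * m) ((-(k : ℂ) / 2 + (σ + 1/2) * m) * c))

noncomputable def AIop (t σ : ℂ) (a : ℤ) (w : (ℤ →₀ ℂ) × (ℤ →₀ ℂ)) :
    (ℤ →₀ ℂ) × (ℤ →₀ ℂ) :=
  (w.1.sum fun k c => Finsupp.single (k + a) ((-2 * t ^ a * (σ + 1)) * c),
   w.2.sum fun k c => Finsupp.single (k + a) ((-(t ^ a) * (2 * σ + 1)) * c))

noncomputable def AGop (t σ : ℂ) (a : ℤ) (w : (ℤ →₀ ℂ) × (ℤ →₀ ℂ)) :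
    (ℤ →₀ ℂ) × (ℤ →₀ ℂ) :=
  (w.2.sum fun k c =>
      Finsupp.single (k + a) (((-t) ^ a * (-(k : ℂ) / 2 + (2 * σ + 1) * ((a : ℂ) / 2))) * c),
   w.1.sum fun k c => Finsupp.single (k + a) (t ^ a * c))

/-- The rescaling map `x̂_j ↦ ν^j · (class of 1 at weight −j/2)`,
`ŷ_j ↦ ν^j · (class of ∂·1 at weight −j/2)` (i.e. `ŵ_n = λ^n w_{−n}`,
`v̂_n = λ^n v_{−n}`), from `A_t(α−1)` to `𝒲(M_t(λ,α))`. -/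
noncomputable def Phi (nu : ℂ) (w : (ℤ →₀ ℂ) × (ℤ →₀ ℂ)) :
    (ℤ →₀ ℂ) × (ℤ →₀ ℂ) :=
  (w.1.sum fun j c => Finsupp.single (-j) (nu ^ j * c),
   w.2.sum fun j c => Finsupp.single (-j) (nu ^ j * c))

private lemma key19 (w : ℤ →₀ ℂ) (p f : ℤ → ℤ) (q : ℤ → ℂ) (g : ℤ → ℂ → ℂ)
    (hg0 : ∀ k, g k 0 = 0) (hgadd : ∀ k b₁ b₂, g k (b₁ + b₂) = g k b₁ + g k b₂) :
    ((w.sum fun j c => Finsupp.single (p j) (q j * c)).sum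
      fun k c => Finsupp.single (f k) (g k c))
    = w.sum fun j c => Finsupp.single (f (p j)) (g (p j) (q j * c)) := by
  rw [Finsupp.sum_sum_index (fun a => by simp [hg0])
      (fun a b₁ b₂ => by simp [hgadd, Finsupp.single_add])]
  exact Finsupp.sum_congr fun j _ => Finsupp.sum_single_index (by simp [hg0])

private lemma cmp19 (w : ℤ →₀ ℂ) (i₁ i₂ : ℤ → ℤ) (a₁ a₂ : ℤ → ℂ → ℂ)
    (hi : ∀ j, i₁ j = i₂ j) (ha : ∀ j c, a₁ j c = a₂ j c) :
    w.sum (fun j c => Finsupp.single (i₁ j) (a₁ j c))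
      = w.sum (fun j c => Finsupp.single (i₂ j) (a₂ j c)) :=
  Finsupp.sum_congr fun j _ => by rw [hi, ha]

/-- The weighting functor applied to `M_t(λ, α)` gives the intermediate series
module `A_t(α − 1)`: the rescaling map `Phi` is a bijection intertwining the
induced 𝒲-action with the `A_t(α−1)`-action. -/
theorem stmt19 (t nu α : ℂ) (ht : t = 1 ∨ t = -1) (hnu : nu ≠ 0) :
    Function.Bijective (Phi nu) ∧
    (∀ (m : ℤ) (w : (ℤ →₀ ℂ) × (ℤ →₀ ℂ)),
        WLop nu α m (Phi nu w) = Phi nu (ALop (α - 1) m w)) ∧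
    (∀ a : ℤ, Odd a → ∀ w : (ℤ →₀ ℂ) × (ℤ →₀ ℂ),
        WIop t nu α a (Phi nu w) = Phi nu (AIop t (α - 1) a w)) ∧
    (∀ (a : ℤ) (w : (ℤ →₀ ℂ) × (ℤ →₀ ℂ)),
        WGop t nu α a (Phi nu w) = Phi nu (AGop t (α - 1) a w)) := by
  refine ⟨?_, ?_, ?_, ?_⟩
  · have hinv : Function.Involutive (Phi nu) := by
      intro w
      simp only [Phi]
      refine Prod.ext ?_ ?_ <;>
      · refine (key19 _ (fun j => -j) (fun k => -k) (fun j => nu ^ j) (fun k c => nu ^ k * c)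
          (fun k => mul_zero _) (fun k b₁ b₂ => mul_add _ _ _)).trans ?_
        refine .trans (cmp19 _ _ (fun j => j) _ (fun j c => c) (fun j => by ring)
          (fun j c => ?_)) (Finsupp.sum_single _)
        rw [← mul_assoc, ← zpow_add₀ hnu]
        simp
    exact hinv.bijective
  · intro m w
    simp only [WLop, Phi, ALop]
    refine Prod.ext ?_ ?_
    · refine (key19 w.1 (fun j => -j) (fun k => k - 2*m) (fun j => nu ^ j)
        (fun k c => (MLop nu α m (C c, 0)).1.eval (((k - 2 * m : ℤ) : ℂ) / 2))
        (fun k => by simp [MLop]) (fun k b₁ b₂ => by simp [MLop]; try ring)).trans ?_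
      refine .trans ?_ (key19 w.1 (fun j => j + 2*m) (fun k => -k)
        (fun j => (-(j : ℂ) / 2 + (α - 1) * m)) (fun k c => nu ^ k * c)
        (fun k => mul_zero _) (fun k b₁ b₂ => mul_add _ _ _)).symm
      refine cmp19 w.1 _ _ _ _ (fun j => by ring) (fun j c => ?_)
      simp only [MLop, C_comp, eval_smul, eval_mul, eval_add, eval_X, eval_C, smul_eq_mul]
      rw [zpow_add₀ hnu]
      push_cast
      ring
    · refine (key19 w.2 (fun j => -j) (fun k => k - 2*m) (fun j => nu ^ j)
        (fun k c => (MLop nu α m (0, C c)).2.eval (((k - 2 * m : ℤ) : ℂ) / 2))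
        (fun k => by simp [MLop]) (fun k b₁ b₂ => by simp [MLop]; try ring)).trans ?_
      refine .trans ?_ (key19 w.2 (fun j => j + 2*m) (fun k => -k)
        (fun j => (-(j : ℂ) / 2 + (α - 1 + 1/2) * m)) (fun k c => nu ^ k * c)
        (fun k => mul_zero _) (fun k b₁ b₂ => mul_add _ _ _)).symm
      refine cmp19 w.2 _ _ _ _ (fun j => by ring) (fun j c => ?_)
      simp only [MLop, C_comp, eval_smul, eval_mul, eval_add, eval_X, eval_C, smul_eq_mul]
      rw [zpow_add₀ hnu]
      push_cast
      ring
  · intro a _ w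
    simp only [WIop, Phi, AIop]
    refine Prod.ext ?_ ?_
    · refine (key19 w.1 (fun j => -j) (fun k => k - a) (fun j => nu ^ j)
        (fun k c => (MIop t nu α a (C c, 0)).1.eval (((k - a : ℤ) : ℂ) / 2))
        (fun k => by simp [MIop]) (fun k b₁ b₂ => by simp [MIop]; try ring)).trans ?_
      refine .trans ?_ (key19 w.1 (fun j => j + a) (fun k => -k)
        (fun j => (-2 * t ^ a * (α - 1 + 1))) (fun k c => nu ^ k * c)
        (fun k => mul_zero _) (fun k b₁ b₂ => mul_add _ _ _)).symm
      refine cmp19 w.1 _ _ _ _ (fun j => by ring) (fun j c => ?_)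
      simp only [MIop, C_comp, eval_smul, eval_C, smul_eq_mul]
      rw [zpow_add₀ hnu]
      ring
    · refine (key19 w.2 (fun j => -j) (fun k => k - a) (fun j => nu ^ j)
        (fun k c => (MIop t nu α a (0, C c)).2.eval (((k - a : ℤ) : ℂ) / 2))
        (fun k => by simp [MIop]) (fun k b₁ b₂ => by simp [MIop]; try ring)).trans ?_
      refine .trans ?_ (key19 w.2 (fun j => j + a) (fun k => -k)
        (fun j => (-(t ^ a) * (2 * (α - 1) + 1))) (fun k c => nu ^ k * c)
        (fun k => mul_zero _) (fun k b₁ b₂ => mul_add _ _ _)).symm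
      refine cmp19 w.2 _ _ _ _ (fun j => by ring) (fun j c => ?_)
      simp only [MIop, C_comp, eval_smul, eval_C, smul_eq_mul]
      rw [zpow_add₀ hnu]
      ring
  · intro a w
    simp only [WGop, Phi, AGop]
    refine Prod.ext ?_ ?_
    · refine (key19 w.2 (fun j => -j) (fun k => k - a) (fun j => nu ^ j)
        (fun k c => (MGop t nu α a (0, C c)).1.eval (((k - a : ℤ) : ℂ) / 2))
        (fun k => by simp [MGop]) (fun k b₁ b₂ => by simp [MGop]; try ring)).trans ?_
      refine .trans ?_ (key19 w.2 (fun j => j + a) (fun k => -k)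
        (fun j => ((-t) ^ a * (-(j : ℂ) / 2 + (2 * (α - 1) + 1) * ((a : ℂ) / 2))))
        (fun k c => nu ^ k * c)
        (fun k => mul_zero _) (fun k b₁ b₂ => mul_add _ _ _)).symm
      refine cmp19 w.2 _ _ _ _ (fun j => by ring) (fun j c => ?_)
      simp only [MGop, C_comp, eval_smul, eval_mul, eval_add, eval_X, eval_C, smul_eq_mul]
      rw [zpow_add₀ hnu]
      push_cast
      ring
    · refine (key19 w.1 (fun j => -j) (fun k => k - a) (fun j => nu ^ j)
        (fun k c => (MGop t nu α a (C c, 0)).2.eval (((k - a : ℤ) : ℂ) / 2))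
        (fun k => by simp [MGop]) (fun k b₁ b₂ => by simp [MGop]; try ring)).trans ?_
      refine .trans ?_ (key19 w.1 (fun j => j + a) (fun k => -k)
        (fun j => (t ^ a : ℂ)) (fun k c => nu ^ k * c)
        (fun k => mul_zero _) (fun k b₁ b₂ => mul_add _ _ _)).symm
      refine cmp19 w.1 _ _ _ _ (fun j => by ring) (fun j c => ?_)
      simp only [MGop, C_comp, eval_smul, eval_C, smul_eq_mul]
      rw [zpow_add₀ hnu]
      ring
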